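/- arXiv:1709.07296 — 5 statements merged into one kernel-verified Lean document; each statement's English description precedes it below -/
import Mathlib

section
/- Let p, χ, δ, d > 0 satisfy 1 − 2χ/(π(δ + 1/(dδ))) < d·p < 1, and define c(λ) = λ + p/λ − (2χ/π)·arctan(min(λ, 1/√d)/δ) for λ > 0. Then for every λ > 0 one has c(λ) ≥ 1/√d + p√d − (2χ/π)·arctan(1/(√d·δ)), with equality at λ = 1/√d; hence the infimum of c over λ > 0 equals 1/√d + p√d − (2χ/π)·arctan(1/(√d·δ)). -/
open Real
set_option maxHeartbeats 1000000

theorem min_speed_case_intermediate (p χ δ d : ℝ)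
    (hp : 0 < p) (hχ : 0 < χ) (hδ : 0 < δ) (hd : 0 < d)
    (hlow : 1 - 2 * χ / (π * (δ + 1 / (d * δ))) < d * p)
    (hup : d * p < 1) :
    (∀ l > 0,
        l + p / l - (2 * χ / π) * arctan (min l (1 / sqrt d) / δ)
          ≥ 1 / sqrt d + p * sqrt d - (2 * χ / π) * arctan (1 / (sqrt d * δ)))
    ∧ (1 / sqrt d + p / (1 / sqrt d)
        - (2 * χ / π) * arctan (min (1 / sqrt d) (1 / sqrt d) / δ)
        = 1 / sqrt d + p * sqrt d - (2 * χ / π) * arctan (1 / (sqrt d * δ)))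
    ∧ IsGLB
        ((fun l => l + p / l - (2 * χ / π) * arctan (min l (1 / sqrt d) / δ)) ''
          Set.Ioi 0)
        (1 / sqrt d + p * sqrt d - (2 * χ / π) * arctan (1 / (sqrt d * δ))) := by
  have hπ : 0 < π := Real.pi_pos
  have hsd : 0 < sqrt d := Real.sqrt_pos.mpr hd
  set s : ℝ := 1 / sqrt d with hs
  have hs0 : 0 < s := by positivity
  have hs2 : s ^ 2 = 1 / d := by
    rw [hs, div_pow, one_pow, sq_sqrt hd.le]
  have harg : s / δ = 1 / (sqrt d * δ) := by
    rw [hs]; field_simp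
  have hps : p / s = p * sqrt d := by
    field_simp [hs]
    rw [hs, one_div_mul_cancel hsd.ne']
  set K : ℝ := 2 * χ / π with hK
  have hK0 : 0 < K := by positivity
  -- rewrite the lower hypothesis
  have hlow' : 1 < d * p + K * (δ / (δ ^ 2 + 1 / d)) := by
    have h1 : K * (δ / (δ ^ 2 + 1 / d)) = 2 * χ / (π * (δ + 1 / (d * δ))) := by
      rw [hK]
      field_simp
    linarith
  have hp_lt : p < 1 / d := by
    rw [lt_div_iff₀ hd]; linarith [hup]
  set f : ℝ → ℝ := fun l => l + p / l - K * arctan (l / δ) with hfdef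
  -- derivative of f
  have hderiv : ∀ x : ℝ, 0 < x →
      HasDerivAt f (1 - p / x ^ 2 - K * (δ / (δ ^ 2 + x ^ 2))) x := by
    intro x hx
    have h1 : HasDerivAt (fun l : ℝ => l) 1 x := hasDerivAt_id x
    have h2 : HasDerivAt (fun l : ℝ => p / l) (p * -(x ^ 2)⁻¹) x := by
      simpa [div_eq_mul_inv] using (hasDerivAt_inv hx.ne').const_mul p
    have h3 : HasDerivAt (fun l : ℝ => l / δ) (1 / δ) x := by
      simpa using (hasDerivAt_id x).div_const δ
    have h4 : HasDerivAt (fun l : ℝ => arctan (l / δ))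
        ((1 / (1 + (x / δ) ^ 2)) * (1 / δ)) x :=
      by have := (Real.hasDerivAt_arctan (x / δ)).comp x h3; exact this
    have h5 := (h1.add h2).sub (h4.const_mul K)
    refine h5.congr_deriv ?_
    have hδ2 : (0:ℝ) < δ ^ 2 + x ^ 2 := by positivity
    field_simp
    ring
  -- f is antitone on Ioc 0 s
  have hanti : AntitoneOn f (Set.Ioc 0 s) := by
    have hstrict : StrictAntiOn f (Set.Ioc 0 s) := by
      apply strictAntiOn_of_deriv_neg (convex_Ioc 0 s)
      · apply ContinuousOn.sub
        · exact continuousOn_id.add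
            (continuousOn_const.div continuousOn_id fun x hx => ne_of_gt hx.1)
        · exact (continuous_const.mul
            (Real.continuous_arctan.comp (continuous_id.div_const δ))).continuousOn
      · intro x hx
        rw [interior_Ioc] at hx
        have hx0 : 0 < x := hx.1
        have hxs : x < s := hx.2
        rw [(hderiv x hx0).deriv]
        have hx2 : x ^ 2 ≤ 1 / d := by nlinarith [hs2]
        have e1 : d * p ≤ p / x ^ 2 := by
          have hd1 : d * (1 / d) = 1 := mul_one_div_cancel hd.ne'
          rw [le_div_iff₀ (by positivity)]
          nlinarith [mul_nonneg (mul_pos hd hp).le (sub_nonneg.mpr hx2)]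
        have e2 : δ / (δ ^ 2 + 1 / d) ≤ δ / (δ ^ 2 + x ^ 2) := by
          apply div_le_div_of_nonneg_left hδ.le (by positivity)
          nlinarith [hs2]
        nlinarith [mul_le_mul_of_nonneg_left e2 hK0.le]
    exact hstrict.antitoneOn
  -- part 1
  have part1 : ∀ l > 0,
      l + p / l - K * arctan (min l s / δ)
        ≥ s + p * sqrt d - K * arctan (1 / (sqrt d * δ)) := by
    intro l hl
    rcases le_or_gt l s with hls | hls
    · rw [min_eq_left hls, ← harg, ← hps]
      exact hanti ⟨hl, hls⟩ ⟨hs0, le_refl s⟩ hls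
    · rw [min_eq_right hls.le, harg, ← hps]
      have key : l + p / l - (s + p / s) = (l - s) * (l * s - p) / (l * s) := by
        field_simp
        ring
      have h1 : 0 ≤ (l - s) * (l * s - p) / (l * s) := by
        apply div_nonneg _ (by positivity)
        apply mul_nonneg (by linarith)
        nlinarith [hs2]
      linarith [key ▸ h1]
  refine ⟨part1, ?_, ?_⟩
  · simp only [min_self]; rw [harg, hps]
  · constructor
    · rintro y ⟨l, hl, rfl⟩
      exact part1 l hl
    · intro b hb
      have hmem : (s + p * sqrt d - K * arctan (1 / (sqrt d * δ))) ∈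
          ((fun l => l + p / l - K * arctan (min l s / δ)) '' Set.Ioi 0) := by
        refine ⟨s, hs0, ?_⟩
        simp only [min_self]; rw [harg, hps]
      exact hb hmem
end

section
/- Fix p, χ, d > 0 and for each δ > 0 define m(δ) = inf over λ > 0 of [λ + p/λ − (2χ/π)·arctan(min(λ, 1/√d)/δ)]. Then m(δ) tends to 2√p − χ as δ → 0⁺. -/
open Real Filter

theorem min_speed_limit_stiff (p χ d : ℝ)
    (hp : 0 < p) (hχ : 0 < χ) (hd : 0 < d) :
    Tendsto
      (fun δ : ℝ =>
        sInf ((fun l => l + p / l - (2 * χ / π) * arctan (min l (1 / sqrt d) / δ)) ''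
          Set.Ioi 0))
      (nhdsWithin 0 (Set.Ioi 0)) (nhds (2 * sqrt p - χ)) := by
  have hπ : 0 < π := Real.pi_pos
  have hsp : 0 < sqrt p := Real.sqrt_pos.mpr hp
  have hc : 0 < min (sqrt p) (1 / sqrt d) :=
    lt_min hsp (by positivity)
  -- lower bound for each element
  have hlb : ∀ δ : ℝ, ∀ l : ℝ, 0 < l →
      2 * sqrt p - χ ≤ l + p / l - (2 * χ / π) * arctan (min l (1 / sqrt d) / δ) := by
    intro δ l hl
    have h1 : 2 * sqrt p ≤ l + p / l := by
      have hps : sqrt p * sqrt p = p := Real.mul_self_sqrt hp.le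
      have h2 : (l - sqrt p) ^ 2 / l ≥ 0 := by positivity
      have : l + p / l - 2 * sqrt p = (l - sqrt p) ^ 2 / l := by
        field_simp; ring_nf; nlinarith [hps]
      linarith
    have h2 : (2 * χ / π) * arctan (min l (1 / sqrt d) / δ) ≤ χ := by
      have ha : arctan (min l (1 / sqrt d) / δ) ≤ π / 2 :=
        (Real.arctan_lt_pi_div_two _).le
      have hcoef : 0 < 2 * χ / π := by positivity
      calc (2 * χ / π) * arctan (min l (1 / sqrt d) / δ)
          ≤ (2 * χ / π) * (π / 2) := by
            exact mul_le_mul_of_nonneg_left ha hcoef.le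
        _ = χ := by field_simp
    linarith
  -- squeeze
  have hupper : Tendsto (fun δ : ℝ =>
      2 * sqrt p - (2 * χ / π) * arctan (min (sqrt p) (1 / sqrt d) / δ))
      (nhdsWithin 0 (Set.Ioi 0)) (nhds (2 * sqrt p - χ)) := by
    have hdiv : Tendsto (fun δ : ℝ => min (sqrt p) (1 / sqrt d) / δ)
        (nhdsWithin 0 (Set.Ioi 0)) atTop := by
      have h1 : Tendsto (fun δ : ℝ => δ⁻¹) (nhdsWithin 0 (Set.Ioi 0)) atTop :=
        tendsto_inv_nhdsGT_zero
      have := h1.const_mul_atTop hc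
      simpa [div_eq_mul_inv] using this
    have harct : Tendsto (fun δ : ℝ => arctan (min (sqrt p) (1 / sqrt d) / δ))
        (nhdsWithin 0 (Set.Ioi 0)) (nhds (π / 2)) :=
      (Real.tendsto_arctan_atTop.mono_right nhdsWithin_le_nhds).comp hdiv
    have : Tendsto (fun δ : ℝ =>
        2 * sqrt p - (2 * χ / π) * arctan (min (sqrt p) (1 / sqrt d) / δ))
        (nhdsWithin 0 (Set.Ioi 0)) (nhds (2 * sqrt p - (2 * χ / π) * (π / 2))) :=
      tendsto_const_nhds.sub (tendsto_const_nhds.mul harct)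
    have heq : 2 * sqrt p - (2 * χ / π) * (π / 2) = 2 * sqrt p - χ := by
      field_simp
    rwa [heq] at this
  apply tendsto_of_tendsto_of_tendsto_of_le_of_le' tendsto_const_nhds hupper
  · -- lower bound on the inf
    filter_upwards [self_mem_nhdsWithin] with δ hδ
    apply le_csInf ((Set.nonempty_Ioi (a := (0:ℝ))).image _)
    rintro x ⟨l, hl, rfl⟩
    exact hlb δ l hl
  · -- inf ≤ value at sqrt p
    filter_upwards [self_mem_nhdsWithin] with δ hδ
    have hmem : sqrt p ∈ Set.Ioi (0:ℝ) := hsp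
    have hbdd : BddBelow ((fun l => l + p / l - (2 * χ / π) * arctan (min l (1 / sqrt d) / δ)) ''
        Set.Ioi 0) := by
      refine ⟨2 * sqrt p - χ, ?_⟩
      rintro x ⟨l, hl, rfl⟩
      exact hlb δ l hl
    have hle := csInf_le hbdd (Set.mem_image_of_mem _ hmem)
    have hv : sqrt p + p / sqrt p = 2 * sqrt p := by
      rw [Real.div_sqrt]; ring
    calc sInf _ ≤ sqrt p + p / sqrt p - (2 * χ / π) * arctan (min (sqrt p) (1 / sqrt d) / δ) := hle
      _ = 2 * sqrt p - (2 * χ / π) * arctan (min (sqrt p) (1 / sqrt d) / δ) := by rw [hv]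
end

section
/- Let d > 0 and let ρ : ℝ → ℝ be continuous and bounded, and define S(ξ) = (1/(2√d)) · ∫_{−∞}^{∞} e^{−|ξ−ζ|/√d} ρ(ζ) dζ. Then S is differentiable at 0 and S'(0) = (1/(2d)) · ∫_{0}^{∞} e^{−ζ/√d} (ρ(ζ) − ρ(−ζ)) dζ. -/
open Real MeasureTheory Set

lemma abs_exp_sub_exp_le {a b m : ℝ} (ha : m ≤ a) (hb : m ≤ b) :
    |Real.exp (-a) - Real.exp (-b)| ≤ Real.exp (-m) * |a - b| := by
  wlog hab : a ≤ b generalizing a b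
  · have := this hb ha (le_of_not_ge hab)
    rwa [abs_sub_comm (Real.exp (-b)), abs_sub_comm b a] at this
  have h1 : Real.exp (-b) ≤ Real.exp (-a) := Real.exp_le_exp.2 (by linarith)
  rw [abs_of_nonneg (by linarith), abs_of_nonpos (by linarith)]
  have h2 : Real.exp (-a) - Real.exp (-b) = Real.exp (-a) * (1 - Real.exp (-(b - a))) := by
    rw [mul_sub, mul_one, ← Real.exp_add]; ring_nf
  rw [h2]
  have h3 : 1 - Real.exp (-(b - a)) ≤ b - a := by
    have := Real.add_one_le_exp (-(b - a)); linarith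
  have h4 : 0 ≤ 1 - Real.exp (-(b - a)) := by
    have : Real.exp (-(b - a)) ≤ 1 := Real.exp_le_one_iff.2 (by linarith)
    linarith
  have h5 : Real.exp (-a) ≤ Real.exp (-m) := Real.exp_le_exp.2 (by linarith)
  calc Real.exp (-a) * (1 - Real.exp (-(b - a))) ≤ Real.exp (-m) * (b - a) := by
        exact mul_le_mul h5 h3 h4 (Real.exp_pos _).le
    _ = Real.exp (-m) * -(a - b) := by ring

lemma integrable_exp_neg_abs_div {c : ℝ} (hc : 0 < c) :
    Integrable (fun x : ℝ => Real.exp (-|x| / c)) := by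
  have hioi : IntegrableOn (fun x : ℝ => Real.exp (-|x| / c)) (Ioi 0) := by
    have h := exp_neg_integrableOn_Ioi 0 (show (0:ℝ) < 1/c by positivity)
    refine h.congr_fun (fun x hx => ?_) measurableSet_Ioi
    congr 1
    rw [abs_of_pos hx]; ring
  have hiic : IntegrableOn (fun x : ℝ => Real.exp (-|x| / c)) (Iic 0) := by
    have A : MeasurableEmbedding (fun x : ℝ => -x) :=
      (Homeomorph.neg ℝ).isClosedEmbedding.measurableEmbedding
    have hmap := A.integrableOn_map_iff
      (f := fun x : ℝ => Real.exp (-|x| / c)) (s := Iic 0) (μ := volume)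
    rw [Measure.map_neg_eq_self] at hmap
    rw [hmap]
    have hpre : (fun x : ℝ => -x) ⁻¹' (Iic 0) = Ici 0 := by
      ext x; simp [neg_nonpos]
    rw [hpre]
    have : IntegrableOn (fun x : ℝ => Real.exp (-|x| / c)) (Ici 0) :=
      Iff.mpr integrableOn_Ici_iff_integrableOn_Ioi hioi
    refine this.congr_fun (fun x _ => ?_) measurableSet_Ici
    simp [abs_neg]
  have huniv : (Iic (0:ℝ)) ∪ (Ioi 0) = univ := Iic_union_Ioi
  rw [← integrableOn_univ, ← huniv]
  exact hiic.union hioi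

theorem green_function_derivative_at_zero (d : ℝ) (hd : 0 < d) (ρ : ℝ → ℝ)
    (hcont : Continuous ρ) (hbdd : ∃ M : ℝ, ∀ x, |ρ x| ≤ M) :
    HasDerivAt
      (fun ξ => (1 / (2 * sqrt d)) * ∫ ζ : ℝ, exp (-|ξ - ζ| / sqrt d) * ρ ζ)
      ((1 / (2 * d)) * ∫ ζ in Set.Ioi (0 : ℝ), exp (-ζ / sqrt d) * (ρ ζ - ρ (-ζ)))
      0 := by
  obtain ⟨M, hM⟩ := hbdd
  have hM0 : 0 ≤ M := (abs_nonneg _).trans (hM 0)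
  set c := Real.sqrt d with hcdef
  have hc : 0 < c := Real.sqrt_pos.2 hd
  have hcc : c * c = d := Real.mul_self_sqrt hd.le
  have hcne : c ≠ 0 := hc.ne'
  -- the parametric family and its pointwise derivative at 0
  set F : ℝ → ℝ → ℝ := fun x ζ => Real.exp (-|x - ζ| / c) * ρ ζ with hF
  set F' : ℝ → ℝ := fun ζ =>
    if 0 ≤ ζ then Real.exp (-ζ / c) / c * ρ ζ else -(Real.exp (ζ / c) / c * ρ ζ) with hF'
  set bound : ℝ → ℝ := fun ζ => (M * Real.exp 1 / c) * Real.exp (-|ζ| / c) with hbound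
  have hexpInt : Integrable (fun x : ℝ => Real.exp (-|x| / c)) := integrable_exp_neg_abs_div hc
  have hρb : ∃ C, ∀ x, ‖ρ x‖ ≤ C := ⟨M, fun x => by simpa [Real.norm_eq_abs] using hM x⟩
  have hF_int : Integrable (F 0) := by
    have := hexpInt.bdd_mul hcont.aestronglyMeasurable (Filter.Eventually.of_forall hρb.choose_spec)
    refine this.congr (Filter.Eventually.of_forall fun ζ => ?_)
    simp [hF, mul_comm, abs_neg]
  have hF_meas : ∀ᶠ x in nhds (0:ℝ), AEStronglyMeasurable (F x) volume := by
    refine Filter.Eventually.of_forall fun x => ?_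
    exact (((continuous_const.sub continuous_id).abs.neg.div_const c).rexp.mul hcont).aestronglyMeasurable
  have hF'_meas : AEStronglyMeasurable F' volume := by
    have hs : MeasurableSet {ζ : ℝ | 0 ≤ ζ} := measurableSet_Ici
    exact (Measurable.ite hs
      (((continuous_id.neg.div_const c).rexp.div_const c).mul hcont).measurable
      (((continuous_id.div_const c).rexp.div_const c).mul hcont).measurable.neg).aestronglyMeasurable
  have h_lip : ∀ᵐ ζ : ℝ, LipschitzOnWith (Real.nnabs (bound ζ)) (F · ζ) (Metric.ball 0 c) := by
    refine Filter.Eventually.of_forall fun ζ => ?_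
    refine LipschitzOnWith.of_dist_le_mul fun x hx y hy => ?_
    simp only [Metric.mem_ball, Real.dist_eq, sub_zero] at hx hy
    set m : ℝ := max ((|ζ| - c) / c) 0 with hm
    have hma : ∀ z : ℝ, |z| < c → m ≤ |z - ζ| / c := by
      intro z hz
      refine max_le ?_ (by positivity)
      rw [div_le_div_iff_of_pos_right hc]
      have : |ζ| - |z| ≤ |z - ζ| := by
        have := abs_sub_abs_le_abs_sub ζ z
        rwa [abs_sub_comm] at this
      linarith
    have key := abs_exp_sub_exp_le (hma x hx) (hma y hy)
    have hexpm : Real.exp (-m) ≤ Real.exp 1 * Real.exp (-|ζ| / c) := by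
      rw [← Real.exp_add]
      refine Real.exp_le_exp.2 ?_
      have h1 : (|ζ| - c) / c ≤ m := le_max_left _ _
      have h2 : (|ζ| - c) / c = |ζ| / c - 1 := by field_simp
      have h3 : 1 + -|ζ| / c = -((|ζ| - c) / c) := by rw [h2]; ring
      rw [h3]
      linarith
    have habs : |(|x - ζ| / c - |y - ζ| / c)| ≤ dist x y / c := by
      rw [div_sub_div_same, abs_div, abs_of_pos hc, Real.dist_eq,
        div_le_div_iff_of_pos_right hc]
      have h := abs_abs_sub_abs_le_abs_sub (x - ζ) (y - ζ)
      have h2 : x - ζ - (y - ζ) = x - y := by ring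
      rwa [h2] at h
    have hρ := hM ζ
    have hbnn : (0:ℝ) ≤ bound ζ := by
      have : (0:ℝ) ≤ M * Real.exp 1 / c := by positivity
      exact mul_nonneg this (Real.exp_pos _).le
    rw [Real.dist_eq, Real.coe_nnabs, abs_of_nonneg hbnn]
    have : |F x ζ - F y ζ| = |Real.exp (-(|x - ζ| / c)) - Real.exp (-(|y - ζ| / c))| * |ρ ζ| := by
      simp only [hF]
      rw [← sub_mul, abs_mul, neg_div, neg_div]
    rw [this]
    calc |Real.exp (-(|x - ζ| / c)) - Real.exp (-(|y - ζ| / c))| * |ρ ζ|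
        ≤ (Real.exp (-m) * |(|x - ζ| / c - |y - ζ| / c)|) * M := by
          exact mul_le_mul key (hM ζ) (abs_nonneg _) (by positivity)
      _ ≤ (Real.exp 1 * Real.exp (-|ζ| / c) * (dist x y / c)) * M := by
          refine mul_le_mul_of_nonneg_right ?_ hM0
          exact mul_le_mul hexpm habs (abs_nonneg _) (by positivity)
      _ = bound ζ * dist x y := by
          simp only [hbound]; ring
  have hbound_int : Integrable bound := by
    simpa [hbound] using hexpInt.const_mul (M * Real.exp 1 / c)
  have h_diff : ∀ᵐ ζ : ℝ, HasDerivAt (F · ζ) (F' ζ) 0 := by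
    have h0 : ∀ᵐ ζ : ℝ, ζ ≠ 0 := by
      rw [ae_iff]
      simp only [ne_eq, not_not, Set.setOf_eq_eq_singleton]
      exact Real.volume_singleton
    filter_upwards [h0] with ζ hζ
    rcases lt_or_gt_of_ne hζ with hneg | hpos
    · -- ζ < 0 : near 0, |x - ζ| = x - ζ
      have h1 : HasDerivAt (fun x : ℝ => (ζ - x) / c) (-1 / c) 0 :=
        ((hasDerivAt_id 0).const_sub ζ).div_const c
      have h2 : HasDerivAt (fun x : ℝ => Real.exp ((ζ - x) / c) * ρ ζ)
          (Real.exp ((ζ - 0) / c) * (-1 / c) * ρ ζ) 0 := (h1.exp).mul_const (ρ ζ)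
      have heq : (F · ζ) =ᶠ[nhds (0:ℝ)] fun x => Real.exp ((ζ - x) / c) * ρ ζ := by
        filter_upwards [Metric.ball_mem_nhds (0:ℝ) (show 0 < -ζ by linarith)] with x hx
        simp only [Metric.mem_ball, Real.dist_eq, sub_zero] at hx
        have hxζ : ζ < x := by
          have := neg_abs_le x; linarith
        simp only [hF]
        rw [abs_of_pos (by linarith : 0 < x - ζ)]
        congr 1
        ring_nf
      refine HasDerivAt.congr_of_eventuallyEq ?_ heq
      refine h2.congr_deriv ?_
      simp only [hF', if_neg (not_le.2 hneg), sub_zero]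
      ring
    · -- ζ > 0 : near 0, |x - ζ| = ζ - x
      have h1 : HasDerivAt (fun x : ℝ => (x - ζ) / c) (1 / c) 0 :=
        ((hasDerivAt_id 0).sub_const ζ).div_const c
      have h2 : HasDerivAt (fun x : ℝ => Real.exp ((x - ζ) / c) * ρ ζ)
          (Real.exp ((0 - ζ) / c) * (1 / c) * ρ ζ) 0 := (h1.exp).mul_const (ρ ζ)
      have heq : (F · ζ) =ᶠ[nhds (0:ℝ)] fun x => Real.exp ((x - ζ) / c) * ρ ζ := by
        filter_upwards [Metric.ball_mem_nhds (0:ℝ) hpos] with x hx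
        simp only [Metric.mem_ball, Real.dist_eq, sub_zero] at hx
        have hxζ : x < ζ := by
          have := le_abs_self x; linarith
        simp only [hF]
        rw [abs_of_neg (by linarith : x - ζ < 0)]
        congr 1
        ring_nf
      refine HasDerivAt.congr_of_eventuallyEq ?_ heq
      refine h2.congr_deriv ?_
      simp only [hF', if_pos hpos.le, zero_sub]
      ring
  obtain ⟨hF'int, hderiv⟩ := hasDerivAt_integral_of_dominated_loc_of_lip (Metric.ball_mem_nhds 0 hc) hF_meas hF_int
    hF'_meas h_lip hbound_int h_diff
  -- compute the value of the derivative
  have hsum : ∫ ζ, F' ζ = (1 / c) * ∫ ζ in Set.Ioi (0:ℝ),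
      Real.exp (-ζ / c) * (ρ ζ - ρ (-ζ)) := by
    have hsplit : (∫ ζ in Iic (0:ℝ), F' ζ) + ∫ ζ in Ioi (0:ℝ), F' ζ = ∫ ζ, F' ζ :=
      intervalIntegral.integral_Iic_add_Ioi hF'int.integrableOn hF'int.integrableOn
    have hIoi : ∫ ζ in Ioi (0:ℝ), F' ζ
        = ∫ ζ in Ioi (0:ℝ), Real.exp (-ζ / c) / c * ρ ζ := by
      refine setIntegral_congr_fun measurableSet_Ioi fun ζ hζ => ?_
      simp only [hF', if_pos (le_of_lt (mem_Ioi.mp hζ))]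
    have hIic : ∫ ζ in Iic (0:ℝ), F' ζ
        = ∫ ζ in Iic (0:ℝ), -(Real.exp (ζ / c) / c * ρ ζ) := by
      rw [← setIntegral_congr_set Iio_ae_eq_Iic, ← setIntegral_congr_set Iio_ae_eq_Iic]
      refine setIntegral_congr_fun measurableSet_Iio fun ζ hζ => ?_
      have hζ' : ζ < 0 := hζ
      simp only [hF', if_neg (not_le.2 hζ')]
    have hrefl : ∫ ζ in Iic (0:ℝ), -(Real.exp (ζ / c) / c * ρ ζ)
        = ∫ ζ in Ioi (0:ℝ), -(Real.exp (-ζ / c) / c * ρ (-ζ)) := by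
      have := integral_comp_neg_Ioi (0:ℝ) (fun ζ => -(Real.exp (ζ / c) / c * ρ ζ))
      rw [neg_zero] at this
      rw [← this]
    -- integrability on Ioi 0 of the two pieces
    have hexpIoi : IntegrableOn (fun x : ℝ => Real.exp (-x / c)) (Ioi 0) := by
      have h := exp_neg_integrableOn_Ioi 0 (show (0:ℝ) < 1/c by positivity)
      refine h.congr_fun (fun x _ => ?_) measurableSet_Ioi
      congr 1; ring
    have hint1 : IntegrableOn (fun ζ => Real.exp (-ζ / c) / c * ρ ζ) (Ioi 0) := by
      have := (hexpIoi.bdd_mul hcont.aestronglyMeasurable.restrict (Filter.Eventually.of_forall hρb.choose_spec)).div_const c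
      refine this.congr (Filter.Eventually.of_forall fun ζ => ?_)
      ring
    have hint2 : IntegrableOn (fun ζ => Real.exp (-ζ / c) / c * ρ (-ζ)) (Ioi 0) := by
      have hρn : ∃ C, ∀ x : ℝ, ‖ρ (-x)‖ ≤ C :=
        ⟨M, fun x => by simpa [Real.norm_eq_abs] using hM (-x)⟩
      have := (hexpIoi.bdd_mul ((hcont.comp continuous_neg).aestronglyMeasurable).restrict
        (Filter.Eventually.of_forall hρn.choose_spec)).div_const c
      refine this.congr (Filter.Eventually.of_forall fun ζ => ?_)
      simp only [Function.comp]
      ring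
    rw [← hsplit, hIoi, hIic, hrefl]
    rw [integral_neg, ← sub_eq_neg_add, ← integral_sub hint1 hint2,
      ← integral_const_mul]
    refine setIntegral_congr_fun measurableSet_Ioi fun ζ _ => ?_
    ring
  have hfinal : (1 / (2 * c)) * ∫ ζ, F' ζ
      = (1 / (2 * d)) * ∫ ζ in Set.Ioi (0:ℝ), Real.exp (-ζ / c) * (ρ ζ - ρ (-ζ)) := by
    rw [hsum, ← mul_assoc]
    congr 1
    rw [← hcc]
    field_simp
  have := hderiv.const_mul (1 / (2 * c))
  rw [hfinal] at this
  exact this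
end

section
/- Let d > 0 and λ > 0 with λ·√d ≠ 1. Define ρ : ℝ → ℝ by ρ(ζ) = e^{−λζ} for ζ ≥ 0 and ρ(ζ) = 1 for ζ < 0, and define S(ξ) = (1/(2√d)) · ∫_{−∞}^{∞} e^{−|ξ−ζ|/√d} ρ(ζ) dζ. Then e^{min(λ, 1/√d)·ξ} · S(ξ) converges to a finite positive limit as ξ → +∞; in particular S decays at +∞ with exponential rate exactly min(λ, 1/√d). -/
open Real MeasureTheory Filter
open Set

lemma exp_intOn_Ioi' (a : ℝ) {b : ℝ} (hb : 0 < b) :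
    IntegrableOn (fun x : ℝ => exp (-(b * x))) (Ioi a) := by
  simpa [neg_mul] using exp_neg_integrableOn_Ioi a hb

lemma exp_int_Ioi' (a : ℝ) {b : ℝ} (hb : 0 < b) :
    ∫ x in Ioi a, exp (-(b * x)) = exp (-(b * a)) / b := by
  have h := MeasureTheory.integral_comp_mul_left_Ioi (fun x => exp (-x)) a hb
  simp only [smul_eq_mul] at h
  rw [h, integral_exp_neg_Ioi, div_eq_inv_mul]

lemma exp_intOn_Iic' (a : ℝ) {b : ℝ} (hb : 0 < b) :
    IntegrableOn (fun x : ℝ => exp (b * x)) (Iic a) := by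
  have h2 : IntegrableOn (fun x : ℝ => exp (-(b * x))) (Ici (-a)) := by
    rw [integrableOn_Ici_iff_integrableOn_Ioi]
    exact exp_intOn_Ioi' _ hb
  have key := ((Measure.measurePreserving_neg (volume : Measure ℝ)).integrableOn_comp_preimage
      (Homeomorph.neg ℝ).measurableEmbedding (f := fun x : ℝ => exp (-(b * x)))
      (s := Ici (-a))).mpr h2
  simpa [Function.comp_def, mul_neg, neg_neg] using key

lemma exp_int_Iic' (a : ℝ) {b : ℝ} (hb : 0 < b) :
    ∫ x in Iic a, exp (b * x) = exp (b * a) / b := by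
  have h := integral_comp_neg_Iic a (fun x => exp (-(b * x)))
  simp only [mul_neg, neg_neg] at h
  rw [h, exp_int_Ioi' _ hb]
  simp [mul_neg, neg_neg]

lemma exp_int_interval {c : ℝ} (hc : c ≠ 0) (a b : ℝ) :
    ∫ x in a..b, exp (c * x) = (exp (c * b) - exp (c * a)) / c := by
  have D : ∀ x ∈ Set.uIcc a b, HasDerivAt (fun y => exp (c * y) / c) (exp (c * x)) x := by
    intro x _
    have h := (((hasDerivAt_id x).const_mul c).exp).div_const c
    simpa [mul_div_cancel_right₀ _ hc] using h
  rw [intervalIntegral.integral_eq_sub_of_hasDerivAt D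
    (Continuous.intervalIntegrable (by fun_prop) _ _)]
  ring

lemma Scalc {s lam : ℝ} (hs : 0 < s) (hlam : 0 < lam) (hne : 1 / s ≠ lam)
    (ξ : ℝ) (hξ : 0 ≤ ξ) :
    ∫ ζ : ℝ, exp (-|ξ - ζ| / s) * (if 0 ≤ ζ then exp (-lam * ζ) else 1)
      = s * exp (-(1 / s) * ξ)
        + (exp (-lam * ξ) - exp (-(1 / s) * ξ)) / (1 / s - lam)
        + exp (-lam * ξ) / (1 / s + lam) := by
  have hmu : 0 < 1 / s := by positivity
  have hc : 1 / s - lam ≠ 0 := sub_ne_zero.2 hne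
  have hcp : 0 < 1 / s + lam := by positivity
  set f : ℝ → ℝ := fun ζ => exp (-|ξ - ζ| / s) * (if 0 ≤ ζ then exp (-lam * ζ) else 1)
    with hf
  have eq1 : EqOn f (fun ζ => exp (-(1 / s) * ξ) * exp ((1 / s) * ζ)) (Iic 0) := by
    intro ζ hζ
    simp only [mem_Iic] at hζ
    have h1 : |ξ - ζ| = ξ - ζ := abs_of_nonneg (by linarith)
    have hif : (if 0 ≤ ζ then exp (-lam * ζ) else 1) = 1 := by
      split_ifs with h
      · have : ζ = 0 := le_antisymm hζ h
        simp [this]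
      · rfl
    simp only [hf, h1, hif, mul_one, ← exp_add]
    congr 1
    field_simp
    ring
  have eq2 : EqOn f (fun ζ => exp (-(1 / s) * ξ) * exp ((1 / s - lam) * ζ)) (Ioc 0 ξ) := by
    intro ζ hζ
    simp only [mem_Ioc] at hζ
    have h1 : |ξ - ζ| = ξ - ζ := abs_of_nonneg (by linarith)
    simp only [hf, h1, if_pos hζ.1.le, ← exp_add]
    congr 1
    field_simp
    ring
  have eq3 : EqOn f (fun ζ => exp ((1 / s) * ξ) * exp (-((1 / s + lam) * ζ))) (Ioi ξ) := by
    intro ζ hζ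
    simp only [mem_Ioi] at hζ
    have h1 : |ξ - ζ| = ζ - ξ := by rw [abs_sub_comm]; exact abs_of_nonneg (by linarith)
    have h0 : (0:ℝ) ≤ ζ := le_trans hξ hζ.le
    simp only [hf, h1, if_pos h0, ← exp_add]
    congr 1
    field_simp
    ring
  have base1 : IntegrableOn (fun ζ => exp (-(1 / s) * ξ) * exp ((1 / s) * ζ)) (Iic 0) :=
    (exp_intOn_Iic' 0 hmu).const_mul _
  have int1 : IntegrableOn f (Iic 0) :=
    IntegrableOn.congr_fun base1 eq1.symm measurableSet_Iic
  have base3 : IntegrableOn (fun ζ => exp ((1 / s) * ξ) * exp (-((1 / s + lam) * ζ))) (Ioi ξ) :=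
    (exp_intOn_Ioi' ξ hcp).const_mul _
  have int3 : IntegrableOn f (Ioi ξ) :=
    IntegrableOn.congr_fun base3 eq3.symm measurableSet_Ioi
  have base2 : IntegrableOn (fun ζ => exp (-(1 / s) * ξ) * exp ((1 / s - lam) * ζ)) (Ioc 0 ξ) :=
    Continuous.integrableOn_Ioc (by fun_prop)
  have int2 : IntegrableOn f (Ioc 0 ξ) :=
    IntegrableOn.congr_fun base2 eq2.symm measurableSet_Ioc
  have intIoi : IntegrableOn f (Ioi 0) := by
    have h : Ioc 0 ξ ∪ Ioi ξ = Ioi 0 := Ioc_union_Ioi_eq_Ioi hξ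
    rw [← h, integrableOn_union]
    exact ⟨int2, int3⟩
  rw [← intervalIntegral.integral_Iic_add_Ioi int1 intIoi]
  have hIoi : ∫ ζ in Ioi 0, f ζ = (∫ ζ in Ioc 0 ξ, f ζ) + ∫ ζ in Ioi ξ, f ζ := by
    rw [← setIntegral_union Ioc_disjoint_Ioi_same measurableSet_Ioi int2 int3,
      Ioc_union_Ioi_eq_Ioi hξ]
  rw [hIoi]
  have v1 : ∫ ζ in Iic 0, f ζ = exp (-(1 / s) * ξ) * s := by
    rw [setIntegral_congr_fun measurableSet_Iic eq1, integral_const_mul, exp_int_Iic' 0 hmu]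
    rw [mul_zero, exp_zero]
    congr 1
    rw [one_div_one_div]
  have v2 : ∫ ζ in Ioc 0 ξ, f ζ
      = exp (-(1 / s) * ξ) * ((exp ((1 / s - lam) * ξ) - 1) / (1 / s - lam)) := by
    rw [setIntegral_congr_fun measurableSet_Ioc eq2, integral_const_mul,
      ← intervalIntegral.integral_of_le hξ, exp_int_interval hc]
    rw [mul_zero, exp_zero]
  have v3 : ∫ ζ in Ioi ξ, f ζ
      = exp ((1 / s) * ξ) * (exp (-((1 / s + lam) * ξ)) / (1 / s + lam)) := by
    rw [setIntegral_congr_fun measurableSet_Ioi eq3, integral_const_mul, exp_int_Ioi' ξ hcp]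
  rw [v1, v2, v3]
  have h1 : exp ((1 / s - lam) * ξ) = exp (-lam * ξ) / exp (-(1 / s) * ξ) := by
    rw [eq_div_iff (exp_ne_zero _), ← exp_add]; congr 1; ring
  have h2 : exp ((1 / s) * ξ) = 1 / exp (-(1 / s) * ξ) := by
    rw [eq_div_iff (exp_ne_zero _), ← exp_add]; simp
  have h3 : exp (-((1 / s + lam) * ξ)) = exp (-(1 / s) * ξ) * exp (-lam * ξ) := by
    rw [← exp_add]; congr 1; ring
  rw [h1, h2, h3]
  have hne0 : exp (-(1 / s) * ξ) ≠ 0 := exp_ne_zero _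
  have hd : 1 / s - lam = (1 - s * lam) / s := by field_simp
  have hd' : 1 / s + lam = (1 + s * lam) / s := by field_simp
  have h4 : 1 - s * lam ≠ 0 := by
    intro h
    exact hc (by rw [hd, h, zero_div])
  have h5 : 1 + s * lam ≠ 0 := by positivity
  rw [hd, hd']
  field_simp
  ring

lemma tendsto_exp_coeff_neg {c : ℝ} (hc : c < 0) :
    Tendsto (fun ξ : ℝ => exp (c * ξ)) atTop (nhds 0) :=
  tendsto_exp_atBot.comp (tendsto_id.const_mul_atTop_of_neg hc)

theorem chemoattractant_decay_rate (d lam : ℝ) (hd : 0 < d) (hlam : 0 < lam)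
    (hne : lam * sqrt d ≠ 1) :
    let ρ : ℝ → ℝ := fun ζ => if 0 ≤ ζ then exp (-lam * ζ) else 1
    let S : ℝ → ℝ := fun ξ =>
      (1 / (2 * sqrt d)) * ∫ ζ : ℝ, exp (-|ξ - ζ| / sqrt d) * ρ ζ
    ∃ L : ℝ, 0 < L ∧
      Tendsto (fun ξ => exp (min lam (1 / sqrt d) * ξ) * S ξ) atTop (nhds L) := by
  intro ρ S
  simp only [S, ρ]
  have hs : 0 < sqrt d := sqrt_pos.2 hd
  set s := sqrt d with hsdef
  have hne' : 1 / s ≠ lam := by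
    intro h
    apply hne
    rw [← h]
    field_simp
  rcases lt_or_gt_of_ne hne' with hlt | hgt
  · -- 1/s < lam : rate is 1/s
    have hm : min lam (1 / s) = 1 / s := min_eq_right hlt.le
    have hcneg : 1 / s - lam < 0 := by linarith
    have hexp : Tendsto (fun ξ : ℝ => exp ((1 / s - lam) * ξ)) atTop (nhds 0) :=
      tendsto_exp_coeff_neg hcneg
    have T : Tendsto (fun ξ : ℝ => (1 / (2 * s)) *
        (s + (exp ((1 / s - lam) * ξ) - 1) / (1 / s - lam)
          + exp ((1 / s - lam) * ξ) / (1 / s + lam))) atTop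
        (nhds ((1 / (2 * s)) *
          (s + (0 - 1) / (1 / s - lam) + 0 / (1 / s + lam)))) :=
      Tendsto.const_mul _ ((tendsto_const_nhds.add
        ((hexp.sub tendsto_const_nhds).div_const _)).add (hexp.div_const _))
    refine ⟨_, ?_, Tendsto.congr' ?_ T⟩
    · have a1 : 0 < (0 - 1) / (1 / s - lam) :=
        div_pos_of_neg_of_neg (by norm_num) hcneg
      have a2 : (0:ℝ) / (1 / s + lam) = 0 := zero_div _
      have : 0 < s + (0 - 1) / (1 / s - lam) + 0 / (1 / s + lam) := by
        rw [a2]; linarith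
      exact mul_pos (by positivity) this
    · filter_upwards [eventually_ge_atTop 0] with ξ hξ
      rw [hm, Scalc hs hlam hne' ξ hξ, mul_left_comm]
      congr 1
      have r1 : exp (-lam * ξ) = exp ((1 / s - lam) * ξ) * exp (-(1 / s) * ξ) := by
        rw [← exp_add]; congr 1; ring
      have r2 : exp (1 / s * ξ) * exp (-(1 / s) * ξ) = 1 := by
        rw [← exp_add]; simp
      rw [r1]
      linear_combination (-(s + (exp ((1 / s - lam) * ξ) - 1) / (1 / s - lam)
        + exp ((1 / s - lam) * ξ) / (1 / s + lam))) * r2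
  · -- lam < 1/s : rate is lam
    have hm : min lam (1 / s) = lam := min_eq_left hgt.le
    have hcneg : lam - 1 / s < 0 := by linarith
    have hexp : Tendsto (fun ξ : ℝ => exp ((lam - 1 / s) * ξ)) atTop (nhds 0) :=
      tendsto_exp_coeff_neg hcneg
    have T : Tendsto (fun ξ : ℝ => (1 / (2 * s)) *
        (s * exp ((lam - 1 / s) * ξ) + (1 - exp ((lam - 1 / s) * ξ)) / (1 / s - lam)
          + 1 / (1 / s + lam))) atTop
        (nhds ((1 / (2 * s)) *
          (s * 0 + (1 - 0) / (1 / s - lam) + 1 / (1 / s + lam)))) :=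
      Tendsto.const_mul _ (((hexp.const_mul s).add
        ((tendsto_const_nhds.sub hexp).div_const _)).add tendsto_const_nhds)
    refine ⟨_, ?_, Tendsto.congr' ?_ T⟩
    · have hpos : 0 < 1 / s - lam := by linarith
      have hpos2 : 0 < 1 / s + lam := by positivity
      have a1 : 0 < (1 - 0) / (1 / s - lam) := by
        apply div_pos (by norm_num) hpos
      have a2 : 0 < 1 / (1 / s + lam) := by positivity
      have : 0 < s * 0 + (1 - 0) / (1 / s - lam) + 1 / (1 / s + lam) := by
        rw [mul_zero, zero_add]; linarith
      exact mul_pos (by positivity) this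
    · filter_upwards [eventually_ge_atTop 0] with ξ hξ
      rw [hm, Scalc hs hlam hne' ξ hξ, mul_left_comm]
      congr 1
      have r1 : exp (-(1 / s) * ξ) = exp ((lam - 1 / s) * ξ) * exp (-lam * ξ) := by
        rw [← exp_add]; congr 1; ring
      have r2 : exp (lam * ξ) * exp (-lam * ξ) = 1 := by
        rw [← exp_add]; simp
      rw [r1]
      linear_combination (-(s * exp ((lam - 1 / s) * ξ)
        + (1 - exp ((lam - 1 / s) * ξ)) / (1 / s - lam) + 1 / (1 / s + lam))) * r2
end

section
/- Let t ∈ (0, 1) and χ̂ > 0, define μ± = χ̂ − √(χ̂² − 2χ̂ + 1/t²) ± 1/t and g(s, t) = μ₊s²t(1 + t − t²) − μ₋t(1 − t − t²) − 4χ̂·s^{1+t} for s ∈ (0, 1). Then g(s, t) → −μ₋·t·(1 − t − t²) as s → 0⁺, and this limit is positive if and only if t < (√5 − 1)/2. Moreover, for p > 0 with t = √(p/(1+p)), one has t < (√5 − 1)/2 if and only if p < (√5 − 1)/2. -/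
open Real Filter

theorem g_limit_and_upper_bound (t χ : ℝ)
    (ht : t ∈ Set.Ioo (0 : ℝ) 1) (hχ : 0 < χ) :
    let μp : ℝ := χ - sqrt (χ ^ 2 - 2 * χ + 1 / t ^ 2) + 1 / t
    let μm : ℝ := χ - sqrt (χ ^ 2 - 2 * χ + 1 / t ^ 2) - 1 / t
    Tendsto
      (fun s : ℝ => μp * s ^ 2 * t * (1 + t - t ^ 2) - μm * t * (1 - t - t ^ 2)
        - 4 * χ * s ^ (1 + t))
      (nhdsWithin 0 (Set.Ioi 0))
      (nhds (-μm * t * (1 - t - t ^ 2)))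
    ∧ (0 < -μm * t * (1 - t - t ^ 2) ↔ t < (sqrt 5 - 1) / 2)
    ∧ (∀ p : ℝ, 0 < p → t = sqrt (p / (1 + p)) →
        (t < (sqrt 5 - 1) / 2 ↔ p < (sqrt 5 - 1) / 2)) := by
  obtain ⟨ht0, ht1⟩ := ht
  intro μp μm
  have h1t : (0:ℝ) < 1 + t := by linarith
  have hs5 : sqrt 5 ^ 2 = 5 := Real.sq_sqrt (by norm_num)
  have hs5' : (1:ℝ) < sqrt 5 := by nlinarith [Real.sqrt_nonneg 5]
  -- μm < 0
  have hμm : μm < 0 := by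
    show χ - sqrt (χ ^ 2 - 2 * χ + 1 / t ^ 2) - 1 / t < 0
    have ht2 : (1:ℝ) ≤ 1 / t ^ 2 := by
      rw [le_div_iff₀ (by positivity)]; nlinarith
    have h1 : (χ - 1) ^ 2 ≤ χ ^ 2 - 2 * χ + 1 / t ^ 2 := by nlinarith
    have h2 : |χ - 1| ≤ sqrt (χ ^ 2 - 2 * χ + 1 / t ^ 2) := by
      rw [← Real.sqrt_sq_eq_abs]; exact Real.sqrt_le_sqrt h1
    have h3 : χ - 1 ≤ sqrt (χ ^ 2 - 2 * χ + 1 / t ^ 2) :=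
      le_trans (le_abs_self _) h2
    have h4 : (1:ℝ) < 1 / t := by rw [lt_div_iff₀ ht0]; linarith
    linarith
  refine ⟨?_, ?_, ?_⟩
  · -- the limit
    have hA : Tendsto (fun s : ℝ => s ^ (1 + t)) (nhds 0) (nhds 0) := by
      have := (Real.continuousAt_rpow_const 0 (1 + t) (Or.inr h1t.le)).tendsto
      simpa [Real.zero_rpow (ne_of_gt h1t)] using this
    have hB : Tendsto (fun s : ℝ => μp * s ^ 2 * t * (1 + t - t ^ 2)
        - μm * t * (1 - t - t ^ 2) - 4 * χ * s ^ (1 + t)) (nhds 0)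
        (nhds (μp * (0:ℝ) ^ 2 * t * (1 + t - t ^ 2) - μm * t * (1 - t - t ^ 2)
          - 4 * χ * 0)) := by
      exact (((((tendsto_const_nhds.mul (tendsto_id.pow 2)).mul
        tendsto_const_nhds).mul tendsto_const_nhds).sub
        tendsto_const_nhds).sub (tendsto_const_nhds.mul hA))
    have : μp * (0:ℝ) ^ 2 * t * (1 + t - t ^ 2) - μm * t * (1 - t - t ^ 2)
        - 4 * χ * 0 = -μm * t * (1 - t - t ^ 2) := by ring
    rw [this] at hB
    exact hB.mono_left nhdsWithin_le_nhds
  · -- positivity iff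
    have key : 0 < -μm * t := mul_pos (neg_pos.mpr hμm) ht0
    have hiff : (0 < 1 - t - t ^ 2) ↔ t < (sqrt 5 - 1) / 2 := by
      constructor
      · intro h; nlinarith
      · intro h; nlinarith
    rw [← hiff]
    constructor
    · intro h; nlinarith
    · intro h; exact mul_pos key h
  · intro p hp htp
    have hp1 : (0:ℝ) < 1 + p := by linarith
    have hc : (0:ℝ) < (sqrt 5 - 1) / 2 := by nlinarith
    rw [htp, Real.sqrt_lt' hc, div_lt_iff₀ hp1]
    constructor
    · intro h; nlinarith
    · intro h; nlinarith
end
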